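/- Suppose the operator norm of the block matrix 𝚪 : X^n → X^n, (𝚪φ)_i = Γ_i Σ_{k≠i} φ_k (zero diagonal, all off-diagonal entries of row i equal to Γ_i), is strictly less than 1, where X^n carries the norm ‖φ‖ = max_i ‖φ_i‖. Then I − G is bijective and the operator Γ defined by I − Γ = (I − G)^{−1} is given by the norm-convergent alternating series over chains of pairwise distinct neighbouring indices: Γ = Σ_i Γ_i − Σ_{i≠j} Γ_i Γ_j + Σ_{i≠j, j≠k} Γ_i Γ_j Γ_k − … , i.e. Γ = Σ_{m=1}^∞ (−1)^{m+1} Σ_{i₁≠i₂, i₂≠i₃, …, i_{m−1}≠i_m} Γ_{i₁} Γ_{i₂} ⋯ Γ_{i_m}. -/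

import Mathlib

open Finset

namespace Stmt5Aux

variable {X : Type*} [NormedAddCommGroup X] [NormedSpace ℂ X]
variable {n : ℕ}

def chainsF (n m : ℕ) : Finset (Fin (m+1) → Fin n) :=
  Finset.univ.filter (fun c => ∀ l : Fin m, c l.castSucc ≠ c l.succ)

lemma mem_chainsF {m : ℕ} {c : Fin (m+1) → Fin n} :
    c ∈ chainsF n m ↔ ∀ l : Fin m, c l.castSucc ≠ c l.succ := by
  simp [chainsF]

lemma tail_mem_chainsF {m : ℕ} {c : Fin (m+2) → Fin n} (hc : c ∈ chainsF n (m+1)) :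
    (c ∘ Fin.succ) ∈ chainsF n m := by
  rw [mem_chainsF] at hc ⊢
  intro l
  have := hc l.succ
  simpa using this

lemma cons_mem_chainsF {m : ℕ} {j : Fin n} {c : Fin (m+1) → Fin n}
    (hc : c ∈ chainsF n m) (hj : c 0 ≠ j) : Fin.cons j c ∈ chainsF n (m+1) := by
  rw [mem_chainsF] at hc ⊢
  intro l
  refine Fin.cases ?_ (fun p => ?_) l
  · simpa [Fin.succ_zero_eq_one] using fun h => hj h.symm
  · have := hc p
    simpa using this

lemma sum_chains_cons {M : Type*} [AddCommMonoid M] (m : ℕ) (j : Fin n)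
    (F : (Fin (m+2) → Fin n) → M) :
    ∑ c ∈ (chainsF n (m+1)).filter (fun c => c 0 = j), F c
      = ∑ c ∈ (chainsF n m).filter (fun c => c 0 ≠ j), F (Fin.cons j c) := by
  refine Finset.sum_nbij' (fun c => c ∘ Fin.succ) (fun c => Fin.cons j c) ?_ ?_ ?_ ?_ ?_
  · intro c hc
    rw [Finset.mem_filter] at hc ⊢
    have h0 := (mem_chainsF.1 hc.1) 0
    refine ⟨tail_mem_chainsF hc.1, ?_⟩
    simp only [Function.comp_apply]
    simpa [hc.2, Fin.succ_zero_eq_one] using fun h => h0 (by simpa [hc.2, Fin.succ_zero_eq_one] using h.symm)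
  · intro c hc
    rw [Finset.mem_filter] at hc ⊢
    exact ⟨cons_mem_chainsF hc.1 hc.2, by simp⟩
  · intro c hc
    rw [Finset.mem_filter] at hc
    funext p
    refine Fin.cases ?_ (fun q => ?_) p
    · simpa using hc.2.symm
    · simp
  · intro c hc; funext p; simp
  · intro c hc
    rw [Finset.mem_filter] at hc
    congr 1
    funext p
    refine Fin.cases ?_ (fun q => ?_) p
    · simpa using hc.2
    · simp


lemma sum_chains_cons_univ {M : Type*} [AddCommMonoid M] (m : ℕ)
    (F : (Fin (m+2) → Fin n) → M) :
    ∑ c ∈ chainsF n (m+1), F c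
      = ∑ j, ∑ c ∈ (chainsF n m).filter (fun c => c 0 ≠ j), F (Fin.cons j c) := by
  rw [← Finset.sum_fiberwise (chainsF n (m+1)) (fun c => c 0) F]
  exact Finset.sum_congr rfl fun j _ => sum_chains_cons m j F

lemma init_mem_chainsF {m : ℕ} {c : Fin (m+2) → Fin n} (hc : c ∈ chainsF n (m+1)) :
    Fin.init c ∈ chainsF n m := by
  rw [mem_chainsF] at hc ⊢
  intro l
  have := hc l.castSucc
  simpa [Fin.init] using this

lemma snoc_mem_chainsF {m : ℕ} {c : Fin (m+1) → Fin n} {j : Fin n}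
    (hc : c ∈ chainsF n m) (hj : j ≠ c (Fin.last m)) :
    (Fin.snoc c j : Fin (m+2) → Fin n) ∈ chainsF n (m+1) := by
  rw [mem_chainsF] at hc ⊢
  intro l
  refine Fin.lastCases ?_ (fun p => ?_) l
  · have h1 : (Fin.last m).castSucc = (Fin.last m).castSucc := rfl
    simp only [Fin.succ_last, Fin.snoc_last, Fin.snoc_castSucc]
    exact fun h => hj h.symm
  · have := hc p
    rw [Fin.succ_castSucc, Fin.snoc_castSucc, Fin.snoc_castSucc]; exact this

lemma sum_chains_snoc {M : Type*} [AddCommMonoid M] (m : ℕ)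
    (F : (Fin (m+2) → Fin n) → M) :
    ∑ c ∈ chainsF n (m+1), F c
      = ∑ c ∈ chainsF n m, ∑ j ∈ Finset.univ.erase (c (Fin.last m)), F (Fin.snoc c j) := by
  rw [← Finset.sum_sigma (chainsF n m) (fun c => Finset.univ.erase (c (Fin.last m)))
      (fun x => F (Fin.snoc x.1 x.2))]
  refine Finset.sum_nbij' (fun c => ⟨Fin.init c, c (Fin.last (m+1))⟩)
    (fun x => Fin.snoc x.1 x.2) ?_ ?_ ?_ ?_ ?_
  · intro c hc
    rw [Finset.mem_sigma]
    refine ⟨init_mem_chainsF hc, ?_⟩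
    rw [Finset.mem_erase]
    have := (mem_chainsF.1 hc) (Fin.last m)
    refine ⟨fun h => this ?_, Finset.mem_univ _⟩
    simpa [Fin.init, Fin.succ_last] using h.symm
  · intro x hx
    rw [Finset.mem_sigma] at hx
    have := Finset.mem_erase.1 hx.2
    exact snoc_mem_chainsF hx.1 this.1
  · intro c hc
    simp [Fin.snoc_init_self]
  · intro x hx
    ext p
    · simp [Fin.init_snoc]
    · simp [Fin.snoc_last]
  · intro c hc
    simp [Fin.snoc_init_self]


section ops

lemma prod_ofFn_split_last {R : Type*} [Monoid R] (m : ℕ) (f : Fin (m+1) → R) :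
    (List.ofFn f).prod
      = (List.ofFn fun l : Fin m => f l.castSucc).prod * f (Fin.last m) := by
  rw [List.ofFn_succ', List.concat_eq_append, List.prod_append, List.prod_singleton]

lemma prod_ofFn_split_first {R : Type*} [Monoid R] (m : ℕ) (f : Fin (m+1) → R) :
    (List.ofFn f).prod = f 0 * (List.ofFn fun l : Fin m => f l.succ).prod := by
  rw [List.ofFn_succ, List.prod_cons]

noncomputable def vecS (Γ v : Fin n → X →L[ℂ] X) : ℕ → Fin n → (X →L[ℂ] X)
  | 0 => v
  | (m+1) => fun i => Γ i ∘L (∑ k ∈ Finset.univ.erase i, vecS Γ v m k)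

lemma vecS_apply (Γ v : Fin n → X →L[ℂ] X) (m : ℕ) (i : Fin n) :
    vecS Γ v m i = ∑ c ∈ (chainsF n m).filter (fun c => c 0 = i),
      (List.ofFn fun l : Fin m => Γ (c l.castSucc)).prod * v (c (Fin.last m)) := by
  induction m generalizing i with
  | zero =>
      have hset : (chainsF n 0).filter (fun c => c 0 = i) = {fun _ => i} := by
        ext c
        simp [chainsF, Finset.mem_filter, funext_iff, Fin.forall_fin_one,
          IsEmpty.forall_iff]
      rw [hset, Finset.sum_singleton]
      simp [vecS]
  | succ m ih =>
      have step : vecS Γ v (m+1) i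
          = Γ i ∘L (∑ k ∈ Finset.univ.erase i, vecS Γ v m k) := rfl
      rw [step]
      simp_rw [ih]
      rw [Finset.sum_fiberwise_eq_sum_filter (chainsF n m) (Finset.univ.erase i)
        (fun c => c 0) _]
      rw [sum_chains_cons m i]
      have hfil : (chainsF n m).filter (fun c => c 0 ∈ Finset.univ.erase i)
          = (chainsF n m).filter (fun c => c 0 ≠ i) := by
        apply Finset.filter_congr
        intro c _
        simp
      rw [hfil]
      have hcomp : ∀ (S : X →L[ℂ] X), (Γ i).comp S = Γ i * S := fun _ => rfl
      rw [hcomp, Finset.mul_sum]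
      refine Finset.sum_congr rfl fun c hc => ?_
      have h1 : (List.ofFn fun l : Fin (m+1) => Γ ((Fin.cons i c : Fin (m+2) → Fin n) l.castSucc)).prod
          = Γ i * (List.ofFn fun l : Fin m => Γ (c l.castSucc)).prod := by
        rw [prod_ofFn_split_first]
        simp only [← Fin.succ_castSucc, Fin.cons_succ, Fin.castSucc_zero, Fin.cons_zero]
      have h2 : (Fin.cons i c : Fin (m+2) → Fin n) (Fin.last (m+1)) = c (Fin.last m) := by
        rw [← Fin.succ_last, Fin.cons_succ]
      rw [h1, h2, mul_assoc]


noncomputable def Sop (Γ v : Fin n → X →L[ℂ] X) (m : ℕ) : X →L[ℂ] X :=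
  ∑ i, vecS Γ v m i

lemma Sop_eq (Γ v : Fin n → X →L[ℂ] X) (m : ℕ) :
    Sop Γ v m = ∑ c ∈ chainsF n m,
      (List.ofFn fun l : Fin m => Γ (c l.castSucc)).prod * v (c (Fin.last m)) := by
  rw [Sop]
  simp_rw [vecS_apply]
  exact Finset.sum_fiberwise (chainsF n m) (fun c => c 0) _

lemma sum_erase_vecS_eq (Γ v : Fin n → X →L[ℂ] X) (m : ℕ) (j : Fin n) :
    ∑ i ∈ Finset.univ.erase j, vecS Γ v m i
      = ∑ c ∈ (chainsF n m).filter (fun c => c 0 ≠ j),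
          (List.ofFn fun l : Fin m => Γ (c l.castSucc)).prod * v (c (Fin.last m)) := by
  simp_rw [vecS_apply]
  rw [Finset.sum_fiberwise_eq_sum_filter (chainsF n m) (Finset.univ.erase j)
    (fun c => c 0) _]
  apply Finset.sum_congr _ (fun _ _ => rfl)
  apply Finset.filter_congr
  intro c _
  simp

lemma norm_vecS_pi_le (Γ v : Fin n → X →L[ℂ] X)
    (Γmat : (Fin n → X) →L[ℂ] (Fin n → X))
    (hΓmat : ∀ (φ : Fin n → X) (i : Fin n), Γmat φ i = Γ i (∑ k ∈ Finset.univ.erase i, φ k))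
    (m : ℕ) (x : X) :
    ‖(fun i => vecS Γ v m i x : Fin n → X)‖
      ≤ ‖Γmat‖ ^ m * ‖(fun i => v i x : Fin n → X)‖ := by
  induction m with
  | zero => simp [vecS]
  | succ m ih =>
      have hfun : (fun i => vecS Γ v (m+1) i x : Fin n → X)
          = Γmat (fun i => vecS Γ v m i x) := by
        funext i
        rw [hΓmat]
        show (Γ i ∘L (∑ k ∈ Finset.univ.erase i, vecS Γ v m k)) x = _
        rw [ContinuousLinearMap.comp_apply, ContinuousLinearMap.sum_apply]
      rw [hfun]
      calc ‖Γmat (fun i => vecS Γ v m i x)‖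
          ≤ ‖Γmat‖ * ‖(fun i => vecS Γ v m i x : Fin n → X)‖ := Γmat.le_opNorm _
        _ ≤ ‖Γmat‖ * (‖Γmat‖ ^ m * ‖(fun i => v i x : Fin n → X)‖) := by
            exact mul_le_mul_of_nonneg_left ih (norm_nonneg _)
        _ = ‖Γmat‖ ^ (m+1) * ‖(fun i => v i x : Fin n → X)‖ := by ring

lemma norm_v_pi_le (v : Fin n → X →L[ℂ] X) (x : X) :
    ‖(fun i => v i x : Fin n → X)‖ ≤ (∑ i, ‖v i‖) * ‖x‖ := by
  refine pi_norm_le_iff_of_nonneg (by positivity) |>.2 fun i => ?_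
  calc ‖v i x‖ ≤ ‖v i‖ * ‖x‖ := (v i).le_opNorm x
    _ ≤ (∑ j, ‖v j‖) * ‖x‖ := by
        apply mul_le_mul_of_nonneg_right _ (norm_nonneg x)
        exact Finset.single_le_sum (fun j _ => norm_nonneg (v j)) (Finset.mem_univ i)

lemma norm_sum_vecS_le (Γ v : Fin n → X →L[ℂ] X)
    (Γmat : (Fin n → X) →L[ℂ] (Fin n → X))
    (hΓmat : ∀ (φ : Fin n → X) (i : Fin n), Γmat φ i = Γ i (∑ k ∈ Finset.univ.erase i, φ k))
    (m : ℕ) (s : Finset (Fin n)) (x : X) :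
    ‖(∑ i ∈ s, vecS Γ v m i) x‖
      ≤ (n * ∑ i, ‖v i‖) * ‖Γmat‖ ^ m * ‖x‖ := by
  rw [ContinuousLinearMap.sum_apply]
  calc ‖∑ i ∈ s, vecS Γ v m i x‖
      ≤ ∑ i ∈ s, ‖vecS Γ v m i x‖ := norm_sum_le _ _
    _ ≤ ∑ _i ∈ s, ‖(fun i => vecS Γ v m i x : Fin n → X)‖ := by
        exact Finset.sum_le_sum fun i _ => norm_le_pi_norm (fun j => vecS Γ v m j x) i
    _ = s.card * ‖(fun i => vecS Γ v m i x : Fin n → X)‖ := by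
        rw [Finset.sum_const, nsmul_eq_mul]
    _ ≤ n * (‖Γmat‖ ^ m * ((∑ i, ‖v i‖) * ‖x‖)) := by
        apply mul_le_mul
        · exact_mod_cast Nat.cast_le.2 (le_trans (Finset.card_le_univ s) (by simp))
        · exact le_trans (norm_vecS_pi_le Γ v Γmat hΓmat m x)
            (mul_le_mul_of_nonneg_left (norm_v_pi_le v x) (by positivity))
        · exact norm_nonneg _
        · positivity
    _ = (n * ∑ i, ‖v i‖) * ‖Γmat‖ ^ m * ‖x‖ := by ring


noncomputable def Aop (Γ : Fin n → X →L[ℂ] X) (m : ℕ) : X →L[ℂ] X :=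
  ∑ c ∈ chainsF n m, (List.ofFn fun l : Fin (m+1) => Γ (c l)).prod

noncomputable def Cop (Γ G : Fin n → X →L[ℂ] X) (m : ℕ) : X →L[ℂ] X :=
  ∑ c ∈ chainsF n m,
    (List.ofFn fun l : Fin m => Γ (c l.castSucc)).prod * G (c (Fin.last m))

noncomputable def C'op (Γ G : Fin n → X →L[ℂ] X) (m : ℕ) : X →L[ℂ] X :=
  ∑ c ∈ chainsF n m,
    G (c 0) * (List.ofFn fun l : Fin m => Γ (c l.succ)).prod

lemma Aop_eq_Sop (Γ : Fin n → X →L[ℂ] X) (m : ℕ) : Aop Γ m = Sop Γ Γ m := by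
  rw [Sop_eq, Aop]
  exact Finset.sum_congr rfl fun c _ => prod_ofFn_split_last m _

lemma Cop_eq_Sop (Γ G : Fin n → X →L[ℂ] X) (m : ℕ) : Cop Γ G m = Sop Γ G m :=
  (Sop_eq Γ G m).symm

lemma chainsF_zero : chainsF n 0 = Finset.univ := by
  apply Finset.filter_true_of_mem
  intro c _
  exact fun l => l.elim0

lemma Cop_zero (Γ G : Fin n → X →L[ℂ] X) : Cop Γ G 0 = ∑ j, G j := by
  rw [Cop, chainsF_zero]
  simp only [List.ofFn_zero, List.prod_nil, one_mul]
  exact Fintype.sum_equiv (Equiv.funUnique (Fin 1) (Fin n)) _ _ (fun c => rfl)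

lemma C'op_zero (Γ G : Fin n → X →L[ℂ] X) : C'op Γ G 0 = ∑ j, G j := by
  rw [C'op, chainsF_zero]
  simp only [List.ofFn_zero, List.prod_nil, mul_one]
  exact Fintype.sum_equiv (Equiv.funUnique (Fin 1) (Fin n)) _ _ (fun c => rfl)

lemma key1 (Γ G : Fin n → X →L[ℂ] X) (hΓG : ∀ i, Γ i * G i = G i + Γ i) (m : ℕ) :
    Aop Γ m * (∑ j, G j) = Cop Γ G m + Aop Γ m + Cop Γ G (m+1) := by
  have expand : Aop Γ m * (∑ j, G j)
      = ∑ c ∈ chainsF n m, ∑ j,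
          (List.ofFn fun l : Fin (m+1) => Γ (c l)).prod * G j := by
    rw [Aop, Finset.sum_mul]
    exact Finset.sum_congr rfl fun c _ => Finset.mul_sum _ _ _
  have split : ∀ c : Fin (m+1) → Fin n,
      (∑ j, (List.ofFn fun l : Fin (m+1) => Γ (c l)).prod * G j)
        = (List.ofFn fun l : Fin (m+1) => Γ (c l)).prod * G (c (Fin.last m))
          + ∑ j ∈ Finset.univ.erase (c (Fin.last m)),
              (List.ofFn fun l : Fin (m+1) => Γ (c l)).prod * G j := by
    intro c
    exact (Finset.add_sum_erase Finset.univ _ (Finset.mem_univ (c (Fin.last m)))).symm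
  rw [expand]
  simp_rw [split]
  rw [Finset.sum_add_distrib]
  have part1 : ∑ c ∈ chainsF n m,
      (List.ofFn fun l : Fin (m+1) => Γ (c l)).prod * G (c (Fin.last m))
        = Cop Γ G m + Aop Γ m := by
    rw [Cop, Aop, ← Finset.sum_add_distrib]
    refine Finset.sum_congr rfl fun c _ => ?_
    rw [prod_ofFn_split_last m (fun l : Fin (m+1) => Γ (c l)), mul_assoc, hΓG, mul_add]
  have part2 : ∑ c ∈ chainsF n m, ∑ j ∈ Finset.univ.erase (c (Fin.last m)),
      (List.ofFn fun l : Fin (m+1) => Γ (c l)).prod * G j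
        = Cop Γ G (m+1) := by
    rw [Cop, sum_chains_snoc m]
    refine Finset.sum_congr rfl fun c _ => Finset.sum_congr rfl fun j _ => ?_
    have h1 : (List.ofFn fun l : Fin (m+1) =>
        Γ ((Fin.snoc c j : Fin (m+2) → Fin n) l.castSucc)).prod
          = (List.ofFn fun l : Fin (m+1) => Γ (c l)).prod := by
      simp [Fin.snoc_castSucc]
    have h2 : (Fin.snoc c j : Fin (m+2) → Fin n) (Fin.last (m+1)) = j := by
      simp
    rw [h1, h2]
  rw [part1, part2]

lemma key2 (Γ G : Fin n → X →L[ℂ] X) (hGΓ : ∀ i, G i * Γ i = G i + Γ i) (m : ℕ) :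
    (∑ j, G j) * Aop Γ m = C'op Γ G m + Aop Γ m + C'op Γ G (m+1) := by
  have expand : (∑ j, G j) * Aop Γ m
      = ∑ j, ∑ c ∈ chainsF n m,
          G j * (List.ofFn fun l : Fin (m+1) => Γ (c l)).prod := by
    rw [Aop, Finset.sum_mul]
    exact Finset.sum_congr rfl fun j _ => Finset.mul_sum _ _ _
  rw [expand]
  have split : ∀ j, ∑ c ∈ chainsF n m,
      G j * (List.ofFn fun l : Fin (m+1) => Γ (c l)).prod
        = (∑ c ∈ (chainsF n m).filter (fun c => c 0 = j),
            G j * (List.ofFn fun l : Fin (m+1) => Γ (c l)).prod)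
          + ∑ c ∈ (chainsF n m).filter (fun c => ¬ c 0 = j),
              G j * (List.ofFn fun l : Fin (m+1) => Γ (c l)).prod := by
    intro j
    exact (Finset.sum_filter_add_sum_filter_not _ _ _).symm
  simp_rw [split]
  rw [Finset.sum_add_distrib]
  have part1 : ∑ j, ∑ c ∈ (chainsF n m).filter (fun c => c 0 = j),
      G j * (List.ofFn fun l : Fin (m+1) => Γ (c l)).prod
        = C'op Γ G m + Aop Γ m := by
    have hrw : ∀ j, ∑ c ∈ (chainsF n m).filter (fun c => c 0 = j),
        G j * (List.ofFn fun l : Fin (m+1) => Γ (c l)).prod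
          = ∑ c ∈ (chainsF n m).filter (fun c => c 0 = j),
              G (c 0) * (List.ofFn fun l : Fin (m+1) => Γ (c l)).prod := by
      intro j
      refine Finset.sum_congr rfl fun c hc => ?_
      rw [(Finset.mem_filter.1 hc).2]
    simp_rw [hrw]
    rw [Finset.sum_fiberwise (chainsF n m) (fun c => c 0)]
    rw [C'op, Aop, ← Finset.sum_add_distrib]
    refine Finset.sum_congr rfl fun c _ => ?_
    rw [prod_ofFn_split_first m (fun l : Fin (m+1) => Γ (c l)), ← mul_assoc, hGΓ, add_mul]
  have part2 : ∑ j, ∑ c ∈ (chainsF n m).filter (fun c => ¬ c 0 = j),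
      G j * (List.ofFn fun l : Fin (m+1) => Γ (c l)).prod
        = C'op Γ G (m+1) := by
    rw [C'op, sum_chains_cons_univ m]
    refine Finset.sum_congr rfl fun j _ => ?_
    refine Finset.sum_congr rfl fun c hc => ?_
    have h0 : (Fin.cons j c : Fin (m+2) → Fin n) 0 = j := rfl
    have h1 : (List.ofFn fun l : Fin (m+1) =>
        Γ ((Fin.cons j c : Fin (m+2) → Fin n) l.succ)).prod
          = (List.ofFn fun l : Fin (m+1) => Γ (c l)).prod := by
      simp [Fin.cons_succ]
    rw [h0, h1]
  rw [part1, part2]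


lemma norm_Sop_le (Γ v : Fin n → X →L[ℂ] X)
    (Γmat : (Fin n → X) →L[ℂ] (Fin n → X))
    (hΓmat : ∀ (φ : Fin n → X) (i : Fin n), Γmat φ i = Γ i (∑ k ∈ Finset.univ.erase i, φ k))
    (m : ℕ) :
    ‖Sop Γ v m‖ ≤ (n * ∑ i, ‖v i‖) * ‖Γmat‖ ^ m := by
  apply ContinuousLinearMap.opNorm_le_bound _ (by positivity)
  intro x
  exact norm_sum_vecS_le Γ v Γmat hΓmat m Finset.univ x

lemma C'op_succ_eq (Γ G : Fin n → X →L[ℂ] X) (m : ℕ) :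
    C'op Γ G (m+1) = ∑ j, G j * (∑ i ∈ Finset.univ.erase j, vecS Γ Γ m i) := by
  rw [C'op, sum_chains_cons_univ m]
  refine Finset.sum_congr rfl fun j _ => ?_
  rw [sum_erase_vecS_eq Γ Γ m j, Finset.mul_sum]
  refine Finset.sum_congr rfl fun c hc => ?_
  have h0 : (Fin.cons j c : Fin (m+2) → Fin n) 0 = j := rfl
  have h1 : (List.ofFn fun l : Fin (m+1) =>
      Γ ((Fin.cons j c : Fin (m+2) → Fin n) l.succ)).prod
        = (List.ofFn fun l : Fin (m+1) => Γ (c l)).prod := by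
    simp [Fin.cons_succ]
  rw [h0, h1, prod_ofFn_split_last m (fun l : Fin (m+1) => Γ (c l))]

lemma norm_C'op_succ_le (Γ G : Fin n → X →L[ℂ] X)
    (Γmat : (Fin n → X) →L[ℂ] (Fin n → X))
    (hΓmat : ∀ (φ : Fin n → X) (i : Fin n), Γmat φ i = Γ i (∑ k ∈ Finset.univ.erase i, φ k))
    (m : ℕ) :
    ‖C'op Γ G (m+1)‖ ≤ (∑ j, ‖G j‖) * ((n * ∑ i, ‖Γ i‖) * ‖Γmat‖ ^ m) := by
  apply ContinuousLinearMap.opNorm_le_bound _ (by positivity)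
  intro x
  rw [C'op_succ_eq, ContinuousLinearMap.sum_apply]
  calc ‖∑ j, (G j * (∑ i ∈ Finset.univ.erase j, vecS Γ Γ m i)) x‖
      ≤ ∑ j, ‖(G j * (∑ i ∈ Finset.univ.erase j, vecS Γ Γ m i)) x‖ := norm_sum_le _ _
    _ ≤ ∑ j, ‖G j‖ * ((n * ∑ i, ‖Γ i‖) * ‖Γmat‖ ^ m * ‖x‖) := by
        refine Finset.sum_le_sum fun j _ => ?_
        rw [ContinuousLinearMap.mul_apply]
        calc ‖G j ((∑ i ∈ Finset.univ.erase j, vecS Γ Γ m i) x)‖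
            ≤ ‖G j‖ * ‖(∑ i ∈ Finset.univ.erase j, vecS Γ Γ m i) x‖ := (G j).le_opNorm _
          _ ≤ ‖G j‖ * ((n * ∑ i, ‖Γ i‖) * ‖Γmat‖ ^ m * ‖x‖) := by
              exact mul_le_mul_of_nonneg_left
                (norm_sum_vecS_le Γ Γ Γmat hΓmat m _ x) (norm_nonneg _)
    _ = (∑ j, ‖G j‖) * ((n * ∑ i, ‖Γ i‖) * ‖Γmat‖ ^ m) * ‖x‖ := by
        rw [← Finset.sum_mul]
        ring

end ops

end Stmt5Aux

set_option maxHeartbeats 1000000 in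
open Stmt5Aux Filter in
/-- Let `X` be a complex Banach space, `G i : X →L[ℂ] X` bounded with
`I - G i` boundedly invertible and reflection operators `Γ i` given by
`I - Γ i = (I - G i)⁻¹`.  If the block matrix `Γmat : Xⁿ → Xⁿ`,
`(Γmat φ) i = Γ i (∑_{k ≠ i} φ k)` (zero diagonal, off-diagonal entries of row `i` equal
`Γ i`), has operator norm `< 1` (with `Xⁿ` carrying the sup-norm), then `I - G` is
bijective (`G = ∑ i, G i`) and the reflection operator `Γ`, `I - Γ = (I - G)⁻¹`,
is the sum of the norm-convergent alternating series over chains with pairwise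
distinct neighbouring indices:
`Γ = ∑ i, Γ i - ∑_{i ≠ j} Γ i Γ j + ∑_{i ≠ j, j ≠ k} Γ i Γ j Γ k - …`. -/
theorem stmt_5 {X : Type*} [NormedAddCommGroup X] [NormedSpace ℂ X] [CompleteSpace X]
    (n : ℕ) (hn : 1 ≤ n) (G Γ : Fin n → X →L[ℂ] X)
    (hΓ : ∀ i, (1 - G i) * (1 - Γ i) = 1 ∧ (1 - Γ i) * (1 - G i) = 1)
    (Γmat : (Fin n → X) →L[ℂ] (Fin n → X))
    (hΓmat : ∀ (φ : Fin n → X) (i : Fin n), Γmat φ i = Γ i (∑ k ∈ Finset.univ.erase i, φ k))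
    (hnorm : ‖Γmat‖ < 1) :
    Function.Bijective ⇑(1 - ∑ i, G i : X →L[ℂ] X)
    ∧ ∀ Γtot : X →L[ℂ] X,
        (1 - ∑ i, G i) * (1 - Γtot) = 1 → (1 - Γtot) * (1 - ∑ i, G i) = 1 →
        HasSum (fun m : ℕ => ((-1 : ℂ) ^ m) •
          ∑ c ∈ Finset.univ.filter
            (fun c : Fin (m + 1) → Fin n => ∀ l : Fin m, c l.castSucc ≠ c l.succ),
            (List.ofFn (fun l : Fin (m + 1) => Γ (c l))).prod) Γtot := by
  have hΓG : ∀ i, Γ i * G i = G i + Γ i := fun i => by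
    have h := (hΓ i).2
    calc Γ i * G i = (1 - Γ i) * (1 - G i) - 1 + G i + Γ i := by noncomm_ring
      _ = G i + Γ i := by rw [h]; abel
  have hGΓ : ∀ i, G i * Γ i = G i + Γ i := fun i => by
    have h := (hΓ i).1
    calc G i * Γ i = (1 - G i) * (1 - Γ i) - 1 + G i + Γ i := by noncomm_ring
      _ = G i + Γ i := by rw [h]; abel
  set G' : X →L[ℂ] X := ∑ i, G i with hG'
  have hr0 : (0:ℝ) ≤ ‖Γmat‖ := norm_nonneg _
  have normA : ∀ m, ‖Aop Γ m‖ ≤ (n * ∑ i, ‖Γ i‖) * ‖Γmat‖ ^ m := fun m => by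
    rw [Aop_eq_Sop]; exact norm_Sop_le Γ Γ Γmat hΓmat m
  have normC : ∀ m, ‖Cop Γ G m‖ ≤ (n * ∑ i, ‖G i‖) * ‖Γmat‖ ^ m := fun m => by
    rw [Cop_eq_Sop]; exact norm_Sop_le Γ G Γmat hΓmat m
  have hsummable : Summable (fun m : ℕ => ((-1:ℂ)^m) • Aop Γ m) := by
    apply Summable.of_norm_bounded (g := fun m => (n * ∑ i, ‖Γ i‖) * ‖Γmat‖ ^ m)
      ((summable_geometric_of_lt_one hr0 hnorm).mul_left _)
    intro m
    rw [norm_smul ((-1:ℂ)^m) (Aop Γ m)]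
    have h1 : ‖(-1:ℂ)^m‖ = 1 := by simp
    rw [h1, one_mul]
    exact normA m
  set T : X →L[ℂ] X := ∑' m, ((-1:ℂ)^m) • Aop Γ m with hTdef
  have hT : HasSum (fun m => ((-1:ℂ)^m) • Aop Γ m) T := hsummable.hasSum
  have hpow : ∀ m : ℕ, ((-1:ℂ)^(m+1)) = -((-1:ℂ)^m) := fun m => by ring
  have geo : Tendsto (fun m : ℕ => ‖Γmat‖ ^ m) atTop (nhds 0) :=
    tendsto_pow_atTop_nhds_zero_of_lt_one hr0 hnorm
  -- signed C tends to zero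
  have hgC : Tendsto (fun m : ℕ => ((-1:ℂ)^m) • Cop Γ G m) atTop (nhds 0) := by
    rw [tendsto_zero_iff_norm_tendsto_zero]
    apply squeeze_zero (fun m => norm_nonneg _)
      (g := fun m => (n * ∑ i, ‖G i‖) * ‖Γmat‖ ^ m)
    · intro m
      rw [norm_smul ((-1:ℂ)^m) (Cop Γ G m)]
      have h1 : ‖(-1:ℂ)^m‖ = 1 := by simp
      rw [h1, one_mul]
      exact normC m
    · simpa using geo.const_mul (n * ∑ i, ‖G i‖)
  have hgC' : Tendsto (fun m : ℕ => ((-1:ℂ)^m) • C'op Γ G m) atTop (nhds 0) := by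
    rw [← Filter.tendsto_add_atTop_iff_nat 1]
    rw [tendsto_zero_iff_norm_tendsto_zero]
    apply squeeze_zero (fun m => norm_nonneg _)
      (g := fun m => (∑ j, ‖G j‖) * ((n * ∑ i, ‖Γ i‖) * ‖Γmat‖ ^ m))
    · intro m
      rw [norm_smul ((-1:ℂ)^(m+1)) (C'op Γ G (m+1))]
      have h1 : ‖(-1:ℂ)^(m+1)‖ = 1 := by simp
      rw [h1, one_mul]
      exact norm_C'op_succ_le Γ G Γmat hΓmat m
    · simpa [mul_assoc] using geo.const_mul ((∑ j, ‖G j‖) * (n * ∑ i, ‖Γ i‖))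
  -- partial sum identities
  have keyR : ∀ M : ℕ, (∑ m ∈ Finset.range M, ((-1:ℂ)^m) • Aop Γ m) * G'
      = (((-1:ℂ)^(0:ℕ)) • Cop Γ G 0 - ((-1:ℂ)^M) • Cop Γ G M)
        + ∑ m ∈ Finset.range M, ((-1:ℂ)^m) • Aop Γ m := by
    intro M
    rw [Finset.sum_mul]
    have step : ∀ m : ℕ, (((-1:ℂ)^m) • Aop Γ m) * G'
        = (((-1:ℂ)^m) • Cop Γ G m - ((-1:ℂ)^(m+1)) • Cop Γ G (m+1))
          + ((-1:ℂ)^m) • Aop Γ m := by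
      intro m
      rw [smul_mul_assoc, key1 Γ G hΓG m, hpow m]
      simp only [smul_add, neg_smul, sub_neg_eq_add]
      abel
    simp_rw [step]
    rw [Finset.sum_add_distrib, Finset.sum_range_sub' (fun m => ((-1:ℂ)^m) • Cop Γ G m)]
  have keyL : ∀ M : ℕ, G' * (∑ m ∈ Finset.range M, ((-1:ℂ)^m) • Aop Γ m)
      = (((-1:ℂ)^(0:ℕ)) • C'op Γ G 0 - ((-1:ℂ)^M) • C'op Γ G M)
        + ∑ m ∈ Finset.range M, ((-1:ℂ)^m) • Aop Γ m := by
    intro M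
    rw [Finset.mul_sum]
    have step : ∀ m : ℕ, G' * (((-1:ℂ)^m) • Aop Γ m)
        = (((-1:ℂ)^m) • C'op Γ G m - ((-1:ℂ)^(m+1)) • C'op Γ G (m+1))
          + ((-1:ℂ)^m) • Aop Γ m := by
      intro m
      rw [mul_smul_comm, key2 Γ G hGΓ m, hpow m]
      simp only [smul_add, neg_smul, sub_neg_eq_add]
      abel
    simp_rw [step]
    rw [Finset.sum_add_distrib, Finset.sum_range_sub' (fun m => ((-1:ℂ)^m) • C'op Γ G m)]
  -- limits
  have hTG : T * G' = G' + T := by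
    have l1 : Tendsto (fun M => (∑ m ∈ Finset.range M, ((-1:ℂ)^m) • Aop Γ m) * G')
        atTop (nhds (T * G')) := hT.tendsto_sum_nat.mul tendsto_const_nhds
    simp_rw [keyR] at l1
    have l2 : Tendsto (fun M => (((-1:ℂ)^(0:ℕ)) • Cop Γ G 0 - ((-1:ℂ)^M) • Cop Γ G M)
        + ∑ m ∈ Finset.range M, ((-1:ℂ)^m) • Aop Γ m) atTop
        (nhds ((((-1:ℂ)^(0:ℕ)) • Cop Γ G 0 - 0) + T)) :=
      (tendsto_const_nhds.sub hgC).add hT.tendsto_sum_nat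
    have := tendsto_nhds_unique l1 l2
    rw [this, Cop_zero]
    simp [hG']
  have hGT : G' * T = G' + T := by
    have l1 : Tendsto (fun M => G' * (∑ m ∈ Finset.range M, ((-1:ℂ)^m) • Aop Γ m))
        atTop (nhds (G' * T)) := tendsto_const_nhds.mul hT.tendsto_sum_nat
    simp_rw [keyL] at l1
    have l2 : Tendsto (fun M => (((-1:ℂ)^(0:ℕ)) • C'op Γ G 0 - ((-1:ℂ)^M) • C'op Γ G M)
        + ∑ m ∈ Finset.range M, ((-1:ℂ)^m) • Aop Γ m) atTop
        (nhds ((((-1:ℂ)^(0:ℕ)) • C'op Γ G 0 - 0) + T)) :=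
      (tendsto_const_nhds.sub hgC').add hT.tendsto_sum_nat
    have := tendsto_nhds_unique l1 l2
    rw [this, C'op_zero]
    simp [hG']
  have hrightinv : (1 - G') * (1 - T) = 1 := by
    have h : (1 - G') * (1 - T) = 1 - G' - T + G' * T := by noncomm_ring
    rw [h, hGT]
    abel
  have hleftinv : (1 - T) * (1 - G') = 1 := by
    have h : (1 - T) * (1 - G') = 1 - G' - T + T * G' := by noncomm_ring
    rw [h, hTG]
    abel
  constructor
  · constructor
    · intro a b hab
      have ha : ∀ z : X, (1 - T) ((1 - G') z) = z := fun z => by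
        have := congrArg (fun (S : X →L[ℂ] X) => S z) hleftinv
        simpa [ContinuousLinearMap.mul_apply] using this
      rw [← ha a, ← ha b, hab]
    · intro y
      refine ⟨(1 - T) y, ?_⟩
      have := congrArg (fun (S : X →L[ℂ] X) => S y) hrightinv
      simpa [ContinuousLinearMap.mul_apply] using this
  · intro Γtot h1 h2
    have hTot : Γtot = T := by
      have e1 : (1 : X →L[ℂ] X) - Γtot = 1 - T := by
        calc (1 : X →L[ℂ] X) - Γtot
            = (1 - Γtot) * ((1 - G') * (1 - T)) := by rw [hrightinv, mul_one]
          _ = ((1 - Γtot) * (1 - G')) * (1 - T) := by rw [mul_assoc]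
          _ = 1 - T := by rw [h2, one_mul]
      exact sub_right_inj.mp e1
    rw [hTot]
    exact hT
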